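/- Let G be a triangle-free graph and let S be a stable set of the cube G³ of G. Then the union of the neighbourhoods ⋃_{v ∈ S} N_G(v) is a stable set of G. -/

import Mathlib

/-- A set of vertices is stable (independent) if no two of its vertices are adjacent. -/
def SimpleGraph.IsStableSet {V : Type*} (G : SimpleGraph V) (s : Set V) : Prop :=
  ∀ u ∈ s, ∀ v ∈ s, ¬ G.Adj u v

/-- The cube `G³` of a graph `G`: two distinct vertices are adjacent iff they are joined in
`G` by a walk of length at most 3. -/
def SimpleGraph.cube {V : Type*} (G : SimpleGraph V) : SimpleGraph V where
  Adj u v := u ≠ v ∧ ∃ p : G.Walk u v, p.length ≤ 3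
  symm := ⟨by
    rintro u v ⟨h, p, hp⟩
    exact ⟨h.symm, p.reverse, by simpa using hp⟩⟩
  loopless := ⟨by rintro v ⟨h, -⟩; exact h rfl⟩

/-- If `G` is triangle-free and `S` is a stable set of the cube `G³`, then the union of the
neighbourhoods of the vertices of `S` is a stable set of `G`. -/
theorem union_neighborhoods_stable_of_cube_stable {V : Type*} (G : SimpleGraph V)
    (htf : G.CliqueFree 3) (S : Set V) (hS : G.cube.IsStableSet S) :
    G.IsStableSet (⋃ v ∈ S, G.neighborSet v) := by
  classical
  intro u hu v hv huv
  simp only [Set.mem_iUnion, SimpleGraph.mem_neighborSet] at hu hv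
  obtain ⟨a, haS, hau⟩ := hu
  obtain ⟨b, hbS, hbv⟩ := hv
  by_cases hab : a = b
  · subst hab
    exact htf {a, u, v} (SimpleGraph.is3Clique_triple_iff.2 ⟨hau, hbv, huv⟩)
  · exact hS a haS b hbS ⟨hab,
      (hau.toWalk.append (huv.toWalk.append hbv.symm.toWalk)), by simp⟩
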